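/- Let G act properly on a proper δ-hyperbolic space X, let ξ be a non-conical limit point, and let R_ξ satisfy d([ξ, gξ], G·o) ≤ R_ξ for every g ∈ G with gξ ≠ ξ. Then for every R > R_ξ + 2δ and every g ∈ G with gξ ≠ ξ, the sets B_{ξ,R} and B_{gξ,R} are disjoint, where B_{η,R} = { x ∈ X : some geodesic ray [x, η] satisfies d([x,η], G·o) ≥ R }. -/
import Mathlib


open Metric Set Filter Topology

/-- The orbit `G·o` of the basepoint. -/
def orbitSet {X G : Type*} [MetricSpace X] [Group G] (φ : G →* (X ≃ᵢ X)) (o : X) : Set X :=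
  range fun g => φ g o

/-- `ξ` is a conical limit point: some geodesic ray toward `ξ` has points at bounded
distance from the orbit at arbitrarily large times.  Here `RayTo r ξ` means that `r`
(restricted to `[0,∞)`) is a geodesic ray with endpoint `ξ` at infinity. -/
def ConicalPt {X G Bd : Type*} [MetricSpace X] [Group G] (φ : G →* (X ≃ᵢ X)) (o : X)
    (RayTo : (ℝ → X) → Bd → Prop) (ξ : Bd) : Prop :=
  ∃ r : ℝ → X, RayTo r ξ ∧ ∃ R > (0:ℝ), ∀ T : ℝ, ∃ t ≥ T, infDist (r t) (orbitSet φ o) ≤ R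

/-- `B_{ξ,R}`: the set of points from which some geodesic ray to `ξ` stays at distance
at least `R` from the orbit `G·o`. -/
def Bset {X G Bd : Type*} [MetricSpace X] [Group G] (φ : G →* (X ≃ᵢ X)) (o : X)
    (RayTo : (ℝ → X) → Bd → Prop) (ξ : Bd) (R : ℝ) : Set X :=
  {x | ∃ r : ℝ → X, RayTo r ξ ∧ r 0 = x ∧ ∀ t ≥ (0:ℝ), R ≤ infDist (r t) (orbitSet φ o)}

/-- Disjointness of the sets `B_{ξ,R}` and `B_{gξ,R}` for `R > R_ξ + 2δ`, where every
bi-infinite geodesic `[ξ, gξ]` passes within `R_ξ` of the orbit and ideal triangles are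
`2δ`-thin.  `LineTo ℓ ξ η` means `ℓ` is a bi-infinite geodesic from `ξ` to `η`. -/
theorem stmt11 {X G Bd : Type*} [MetricSpace X] [ProperSpace X] [Group G] [MulAction G Bd]
    (φ : G →* (X ≃ᵢ X)) (o : X) (δ : ℝ) (hδ : 0 ≤ δ)
    (RayTo : (ℝ → X) → Bd → Prop) (LineTo : (ℝ → X) → Bd → Bd → Prop)
    (hline_ex : ∀ ξ η : Bd, ξ ≠ η → ∃ ℓ : ℝ → X, LineTo ℓ ξ η)
    (hthin : ∀ (x : X) (ξ η : Bd) (r₁ r₂ ℓ : ℝ → X), RayTo r₁ ξ → RayTo r₂ η →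
      r₁ 0 = x → r₂ 0 = x → LineTo ℓ ξ η →
      ∀ s : ℝ, infDist (ℓ s) ((r₁ '' Ici 0) ∪ (r₂ '' Ici 0)) ≤ 2 * δ)
    (ξ : Bd) (hξ : ¬ ConicalPt φ o RayTo ξ) (Rξ : ℝ)
    (hRξ : ∀ g : G, g • ξ ≠ ξ → ∀ ℓ : ℝ → X, LineTo ℓ ξ (g • ξ) →
      ∃ t : ℝ, infDist (ℓ t) (orbitSet φ o) ≤ Rξ)
    (R : ℝ) (hR : Rξ + 2 * δ < R) (g : G) (hg : g • ξ ≠ ξ) :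
    Disjoint (Bset φ o RayTo ξ R) (Bset φ o RayTo (g • ξ) R) := by
  rw [Set.disjoint_left]
  rintro x ⟨r₁, hr₁, h10, h1⟩ ⟨r₂, hr₂, h20, h2⟩
  obtain ⟨ℓ, hℓ⟩ := hline_ex ξ (g • ξ) (Ne.symm hg)
  obtain ⟨t, ht⟩ := hRξ g hg ℓ hℓ
  have hthin' := hthin x ξ (g • ξ) r₁ r₂ ℓ hr₁ hr₂ h10 h20 hℓ t
  have hne : ((r₁ '' Ici 0) ∪ (r₂ '' Ici 0)).Nonempty :=
    ⟨r₁ 0, Or.inl ⟨0, Set.self_mem_Ici, rfl⟩⟩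
  have hlt : infDist (ℓ t) ((r₁ '' Ici 0) ∪ (r₂ '' Ici 0)) < R - Rξ := by
    have : 2 * δ < R - Rξ := by linarith
    linarith
  obtain ⟨p, hp, hdp⟩ := (Metric.infDist_lt_iff hne).mp hlt
  have key : infDist p (orbitSet φ o) < R := by
    calc infDist p (orbitSet φ o) ≤ infDist (ℓ t) (orbitSet φ o) + dist p (ℓ t) :=
          Metric.infDist_le_infDist_add_dist
      _ = infDist (ℓ t) (orbitSet φ o) + dist (ℓ t) p := by rw [dist_comm]
      _ < Rξ + (R - Rξ) := by exact add_lt_add_of_le_of_lt ht hdp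
      _ = R := by ring
  rcases hp with ⟨s, hs, rfl⟩ | ⟨s, hs, rfl⟩
  · exact absurd (h1 s hs) (not_le.mpr key)
  · exact absurd (h2 s hs) (not_le.mpr key)
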